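/- For any integer m ≥ 2 and any irrational x ∈ (0,1), the convergents pₙ/qₙ of the base-m Chan continued fraction expansion of x converge to x: lim_{n→∞} pₙ(x)/qₙ(x) = x. -/

import Mathlib

/-- The Chan shift transformation `T_m`. -/
noncomputable def chanT (m : ℕ) (x : ℝ) : ℝ :=
  if x = 0 then 0
  else ((m:ℝ) ^ (Int.fract (Real.log (1/x) / Real.log m)) - 1) / ((m:ℝ) - 1)

/-- The first digit `a₁(x) = ⌊log(1/x)/log m⌋`. -/
noncomputable def chanA (m : ℕ) (x : ℝ) : ℤ := ⌊Real.log (1/x) / Real.log m⌋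

lemma chan_key (m : ℕ) (hm : 2 ≤ m) (y : ℝ) (hy : y ∈ Set.Ioo (0:ℝ) 1)
    (hirr : Irrational y) :
    chanT m y ∈ Set.Ioo (0:ℝ) 1 ∧ Irrational (chanT m y) ∧ 0 ≤ chanA m y ∧
    (m:ℝ) ^ (chanA m y) * y * (1 + ((m:ℝ) - 1) * chanT m y) = 1 ∧
    (m:ℝ) ^ (chanA m y) * y ≤ 1 := by
  obtain ⟨hy0, hy1⟩ := hy
  have hm1 : (1:ℝ) < m := by exact_mod_cast Nat.lt_of_lt_of_le one_lt_two hm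
  have hm0 : (0:ℝ) < m := by linarith
  have hlogm : 0 < Real.log m := Real.log_pos hm1
  set L : ℝ := Real.log (1/y) / Real.log m with hLdef
  have hinv1 : (1:ℝ) < 1/y := by rw [lt_div_iff₀ hy0]; linarith
  have hLpos : 0 < L := div_pos (Real.log_pos hinv1) hlogm
  have hAdef : chanA m y = ⌊L⌋ := rfl
  have hA0 : 0 ≤ chanA m y := by rw [hAdef]; exact Int.floor_nonneg.mpr hLpos.le
  have hmulL : Real.log m * L = Real.log (1/y) := by
    rw [hLdef]; field_simp
  have hrpowL : (m:ℝ) ^ L = 1/y := by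
    rw [Real.rpow_def_of_pos hm0, hmulL, Real.exp_log (by positivity)]
  set W : ℝ := (m:ℝ) ^ (⌊L⌋ : ℤ) with hWdef
  have hWr : (m:ℝ) ^ ((⌊L⌋:ℤ) : ℝ) = W := Real.rpow_intCast m ⌊L⌋
  have hWpos : 0 < W := zpow_pos hm0 _
  have hWrat : W = (((m:ℚ) ^ (⌊L⌋:ℤ) : ℚ) : ℝ) := by push_cast; rfl
  have hfr : Int.fract L ≠ 0 := by
    intro h
    have hLeq : L = (⌊L⌋ : ℝ) := by
      have := Int.fract_add_floor L
      rw [h] at this; linarith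
    have hyW : y = W⁻¹ := by
      have : (m:ℝ) ^ L = W := by rw [hLeq, hWr]
      rw [hrpowL] at this
      field_simp at this ⊢
      linarith [this]
    apply (Rat.not_irrational ((m:ℚ) ^ (⌊L⌋:ℤ))⁻¹)
    rw [Rat.cast_inv, ← hWrat, ← hyW]
    exact hirr
  have hfr0 : 0 < Int.fract L := lt_of_le_of_ne (Int.fract_nonneg L) (Ne.symm hfr)
  have hfr1 : Int.fract L < 1 := Int.fract_lt_one L
  have hmfr : (m:ℝ) ^ (Int.fract L) = (1/y) / W := by
    rw [Int.fract, Real.rpow_sub hm0, hrpowL, hWr]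
  have hmfrgt : 1 < (m:ℝ) ^ (Int.fract L) := by
    rw [show (1:ℝ) = (m:ℝ) ^ (0:ℝ) from (Real.rpow_zero m).symm]
    exact Real.rpow_lt_rpow_left_iff hm1 |>.mpr hfr0
  have hmfrlt : (m:ℝ) ^ (Int.fract L) < m := by
    nth_rewrite 2 [show (m:ℝ) = (m:ℝ) ^ (1:ℝ) from (Real.rpow_one m).symm]
    exact Real.rpow_lt_rpow_left_iff hm1 |>.mpr hfr1
  have hTy : chanT m y = ((1/y)/W - 1)/((m:ℝ)-1) := by
    rw [chanT, if_neg (ne_of_gt hy0), ← hLdef, hmfr]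
  have hT0 : 0 < chanT m y := by
    rw [hTy]
    apply div_pos
    · rw [← hmfr]; linarith
    · linarith
  have hT1 : chanT m y < 1 := by
    rw [hTy, div_lt_one (by linarith : (0:ℝ) < (m:ℝ)-1)]
    rw [← hmfr]; linarith
  refine ⟨⟨hT0, hT1⟩, ?_, hA0, ?_, ?_⟩
  · rw [hTy]
    have h1 : Irrational (1/y) := by rw [one_div]; exact hirr.inv
    have h2 : Irrational ((1/y)/W) := by
      rw [hWrat]
      exact h1.div_ratCast (by positivity)
    have h3 : Irrational ((1/y)/W - 1) := by
      simpa using h2.sub_ratCast (q := 1)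
    have h4 : Irrational (((1/y)/W - 1) / (((m:ℚ) - 1 : ℚ) : ℝ)) := by
      apply h3.div_ratCast
      have : (1:ℚ) < (m:ℚ) := by exact_mod_cast Nat.lt_of_lt_of_le one_lt_two hm
      linarith
    have : (((m:ℚ) - 1 : ℚ) : ℝ) = (m:ℝ) - 1 := by push_cast; ring
    rwa [this] at h4
  · rw [hAdef, ← hWdef, hTy]
    have hmne : (m:ℝ) - 1 ≠ 0 := by linarith
    field_simp
    ring
  · rw [hAdef, ← hWdef]
    have hWle : W ≤ 1/y := by
      rw [← hWr, ← hrpowL]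
      exact Real.rpow_le_rpow_left_iff hm1 |>.mpr (Int.floor_le L)
    calc W * y ≤ (1/y) * y := by nlinarith
    _ = 1 := by field_simp

set_option maxHeartbeats 2000000 in
theorem chan_convergents_tendsto (m : ℕ) (hm : 2 ≤ m) (x : ℝ)
    (hx : x ∈ Set.Ioo (0:ℝ) 1) (hirr : Irrational x)
    (a : ℕ → ℤ) (ha0 : a 0 = 0)
    (ha : ∀ n, 1 ≤ n → a n = chanA m ((chanT m)^[n-1] x))
    (p q : ℕ → ℝ) (hp0 : p 0 = 0) (hp1 : p 1 = 1) (hq0 : q 0 = 1)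
    (hq1 : q 1 = (m:ℝ) ^ (a 1) * q 0)
    (hp : ∀ n, 2 ≤ n →
      p n = (m:ℝ) ^ (a n) * p (n-1) + ((m:ℝ) - 1) * (m:ℝ) ^ (a (n-1)) * p (n-2))
    (hq : ∀ n, 2 ≤ n →
      q n = (m:ℝ) ^ (a n) * q (n-1) + ((m:ℝ) - 1) * (m:ℝ) ^ (a (n-1)) * q (n-2)) :
    Filter.Tendsto (fun n => p n / q n) Filter.atTop (nhds x) := by
  have hm1 : (1:ℝ) < m := by exact_mod_cast Nat.lt_of_lt_of_le one_lt_two hm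
  have hm0 : (0:ℝ) < m := by linarith
  have hmm : (0:ℝ) < (m:ℝ) - 1 := by linarith
  set T := chanT m with hT
  have hy : ∀ n, T^[n] x ∈ Set.Ioo (0:ℝ) 1 ∧ Irrational (T^[n] x) := by
    intro n
    induction n with
    | zero => simpa using ⟨hx, hirr⟩
    | succ n ih =>
      rw [Function.iterate_succ_apply']
      obtain ⟨h1, h2, _, _, _⟩ := chan_key m hm _ ih.1 ih.2
      exact ⟨h1, h2⟩
  have hyk : ∀ n, 0 ≤ a (n+1) ∧
      (m:ℝ) ^ (a (n+1)) * (T^[n] x) * (1 + ((m:ℝ)-1) * (T^[n+1] x)) = 1 ∧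
      (m:ℝ) ^ (a (n+1)) * (T^[n] x) ≤ 1 := by
    intro n
    have han : a (n+1) = chanA m (T^[n] x) := ha (n+1) (by omega)
    obtain ⟨_, _, h3, h4, h5⟩ := chan_key m hm _ (hy n).1 (hy n).2
    rw [han, Function.iterate_succ_apply']
    exact ⟨h3, h4, h5⟩
  have hMA : ∀ n, (1:ℝ) ≤ (m:ℝ) ^ (a (n+1)) := fun n =>
    one_le_zpow₀ hm1.le (hyk n).1
  have hMpos : ∀ k : ℤ, (0:ℝ) < (m:ℝ) ^ k := fun k => zpow_pos hm0 k
  have hypos : ∀ n, 0 < T^[n] x := fun n => (hy n).1.1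
  have hp2 : ∀ n, p (n+2) = (m:ℝ)^(a (n+2)) * p (n+1) + ((m:ℝ)-1) * (m:ℝ)^(a (n+1)) * p n :=
    fun n => hp (n+2) (by omega)
  have hq2 : ∀ n, q (n+2) = (m:ℝ)^(a (n+2)) * q (n+1) + ((m:ℝ)-1) * (m:ℝ)^(a (n+1)) * q n :=
    fun n => hq (n+2) (by omega)
  have hqpos : ∀ n, 0 < q n ∧ 0 < q (n+1) := by
    intro n
    induction n with
    | zero =>
      refine ⟨by rw [hq0]; norm_num, ?_⟩
      rw [hq1, hq0]
      have := hMpos (a 1); nlinarith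
    | succ n ih =>
      refine ⟨ih.2, ?_⟩
      show 0 < q (n+2)
      rw [hq2 n]
      have h1 := hMpos (a (n+2)); have h2 := hMpos (a (n+1))
      nlinarith [mul_pos h1 ih.2, mul_pos (mul_pos hmm h2) ih.1]
  have hqmono : ∀ n, (m:ℝ)^(a (n+1)) * q n ≤ q (n+1) := by
    intro n
    cases n with
    | zero => exact le_of_eq hq1.symm
    | succ n =>
      show (m:ℝ)^(a (n+2)) * q (n+1) ≤ q (n+2)
      rw [hq2 n]
      have h2 := hMpos (a (n+1))
      nlinarith [mul_pos (mul_pos hmm h2) (hqpos n).1]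
  have hN : ∀ n, x * q (n+1) - p (n+1)
      = -(((m:ℝ)-1) * (m:ℝ)^(a (n+1)) * (T^[n+1] x)) * (x * q n - p n) := by
    intro n
    induction n with
    | zero =>
      have hk := (hyk 0).2.1
      rw [Function.iterate_zero_apply] at hk
      rw [hq1, hq0, hp1, hp0]
      linear_combination hk
    | succ n ih =>
      have hk := (hyk (n+1)).2.1
      show x * q (n+2) - p (n+2)
        = -(((m:ℝ)-1) * (m:ℝ)^(a (n+2)) * (T^[n+2] x)) * (x * q (n+1) - p (n+1))
      rw [hp2 n, hq2 n]
      linear_combination ((m:ℝ)^(a (n+2)) * (1 + ((m:ℝ)-1) * (T^[n+2] x))) * ih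
        - (((m:ℝ)-1) * (m:ℝ)^(a (n+1)) * (x * q n - p n)) * hk
  have hsgn : ∀ n, 0 < (-1:ℝ)^n * (x * q n - p n) := by
    intro n
    induction n with
    | zero => simpa [hq0, hp0] using hx.1
    | succ n ih =>
      rw [hN n, pow_succ]
      have h1 := hypos (n+1)
      have h2 := hMpos (a (n+1))
      nlinarith [mul_pos (mul_pos (mul_pos hmm h2) h1) ih]
  have hD : ∀ n, p (n+2) * q (n+1) - p (n+1) * q (n+2)
      = -(((m:ℝ)-1) * (m:ℝ)^(a (n+1))) * (p (n+1) * q n - p n * q (n+1)) := by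
    intro n; rw [hp2 n, hq2 n]; ring
  have hDsgn : ∀ n, 0 < (-1:ℝ)^n * (p (n+1) * q n - p n * q (n+1)) := by
    intro n
    induction n with
    | zero => simp [hp0, hp1, hq0]
    | succ n ih =>
      show 0 < (-1:ℝ)^(n+1) * (p (n+2) * q (n+1) - p (n+1) * q (n+2))
      rw [hD n, pow_succ]
      have h2 := hMpos (a (n+1))
      nlinarith [mul_pos (mul_pos hmm h2) ih]
  have hNle : ∀ n, ((-1:ℝ)^(n+1) * (x * q (n+1) - p (n+1))) * q (n+2)
      ≤ (-1:ℝ)^(n+1) * (p (n+2) * q (n+1) - p (n+1) * q (n+2)) := by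
    intro n
    have hu := hsgn n
    have hB : 0 < ((m:ℝ)-1) * (m:ℝ)^(a (n+1)) := mul_pos hmm (hMpos _)
    have hk : (m:ℝ)^(a (n+2)) * (T^[n+1] x) ≤ 1 := (hyk (n+1)).2.2
    rw [pow_succ, hD n, hq2 n]
    have hveq : (-1:ℝ)^n * (-1) * (x * q (n+1) - p (n+1))
        = (((m:ℝ)-1) * (m:ℝ)^(a (n+1))) * (T^[n+1] x) * ((-1:ℝ)^n * (x * q n - p n)) := by
      rw [hN n]; ring
    have h6 : ((-1:ℝ)^n * (-1) * (x * q (n+1) - p (n+1))) * (m:ℝ)^(a (n+2))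
        ≤ (((m:ℝ)-1) * (m:ℝ)^(a (n+1))) * ((-1:ℝ)^n * (x * q n - p n)) := by
      rw [hveq]
      nlinarith [mul_pos hB hu]
    nlinarith [mul_le_mul_of_nonneg_right h6 (hqpos (n+1)).1.le]
  have hgrow : ∀ n, (m:ℝ)^(n+1) * ((-1:ℝ)^(n+1) * (p (n+2) * q (n+1) - p (n+1) * q (n+2)))
      ≤ ((m:ℝ)-1)^(n+1) * (q (n+1) * q (n+2)) := by
    intro n
    induction n with
    | zero =>
      have hd0 : p 2 * q 1 - p 1 * q 2
          = -(((m:ℝ)-1) * (m:ℝ)^(a 1)) * (p 1 * q 0 - p 0 * q 1) := hD 0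
      have hq20 : q 2 = (m:ℝ)^(a 2) * q 1 + ((m:ℝ)-1) * (m:ℝ)^(a 1) * q 0 := hq2 0
      show (m:ℝ)^1 * ((-1:ℝ)^1 * (p 2 * q 1 - p 1 * q 2)) ≤ ((m:ℝ)-1)^1 * (q 1 * q 2)
      rw [hd0, hq20, hq1, hq0, hp1, hp0]
      norm_num
      have h1 := hMpos (a 1); have h2 := hMpos (a 2)
      have h3 : (1:ℝ) ≤ (m:ℝ)^(a 1) := hMA 0
      have h4 : (1:ℝ) ≤ (m:ℝ)^(a 2) := hMA 1
      nlinarith [mul_nonneg (mul_nonneg hmm.le (mul_pos h1 h1).le) (sub_nonneg.mpr h4),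
        mul_nonneg (mul_nonneg (mul_nonneg hm0.le hmm.le) h1.le) (sub_nonneg.mpr h3)]
    | succ n ih =>
      have hd : p (n+3) * q (n+2) - p (n+2) * q (n+3)
          = -(((m:ℝ)-1) * (m:ℝ)^(a (n+2))) * (p (n+2) * q (n+1) - p (n+1) * q (n+2)) := hD (n+1)
      have hqr : q (n+3) = (m:ℝ)^(a (n+3)) * q (n+2) + ((m:ℝ)-1) * (m:ℝ)^(a (n+2)) * q (n+1) :=
        hq2 (n+1)
      have hmono : (m:ℝ)^(a (n+2)) * q (n+1) ≤ q (n+2) := hqmono (n+1)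
      have hq1p : 0 < q (n+1) := (hqpos n).2
      have hq2p : 0 < q (n+2) := (hqpos (n+1)).2
      have hM2 := hMpos (a (n+2)); have hM3 := hMpos (a (n+3))
      have hA3 : (1:ℝ) ≤ (m:ℝ)^(a (n+3)) := hMA (n+2)
      have e1 : (m:ℝ)^(a (n+2)) * (q (n+1) * q (n+2)) ≤ q (n+2) * q (n+2) := by
        nlinarith [mul_le_mul_of_nonneg_right hmono hq2p.le]
      have e2 : (m:ℝ)^(a (n+3)) * ((m:ℝ)^(a (n+2)) * (q (n+1) * q (n+2)))
          + ((m:ℝ)-1) * (m:ℝ)^(a (n+2)) * (q (n+1) * q (n+2)) ≤ q (n+2) * q (n+3) := by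
        rw [hqr]
        nlinarith [mul_le_mul_of_nonneg_left e1 hM3.le]
      have e3 : (m:ℝ) * ((m:ℝ)^(a (n+2)) * (q (n+1) * q (n+2))) ≤ q (n+2) * q (n+3) := by
        nlinarith [e2, mul_nonneg (sub_nonneg.mpr hA3)
          (mul_pos hM2 (mul_pos hq1p hq2p)).le]
      show (m:ℝ)^(n+2) * ((-1:ℝ)^(n+2) * (p (n+3) * q (n+2) - p (n+2) * q (n+3)))
          ≤ ((m:ℝ)-1)^(n+2) * (q (n+2) * q (n+3))
      simp only [pow_succ] at ih ⊢
      rw [hd]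
      have c : (0:ℝ) ≤ ((m:ℝ)-1) * (m:ℝ)^(a (n+2)) * (m:ℝ) := by positivity
      have e4 := mul_le_mul_of_nonneg_left ih c
      have e5 := mul_le_mul_of_nonneg_left e3
        (by positivity : (0:ℝ) ≤ ((m:ℝ)-1)^n * ((m:ℝ)-1) * ((m:ℝ)-1))
      nlinarith [e4, e5]
  have hbound : ∀ n, |p (n+1) / q (n+1) - x| ≤ (((m:ℝ)-1)/m)^(n+1) := by
    intro n
    have hv := hsgn (n+1)
    have h9 := hNle n
    have h10 := hgrow n
    have hq1p : 0 < q (n+1) := (hqpos n).2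
    have hq2p : 0 < q (n+2) := (hqpos (n+1)).2
    have h11 : (m:ℝ)^(n+1) * (((-1:ℝ)^(n+1) * (x * q (n+1) - p (n+1))) * q (n+2))
        ≤ ((m:ℝ)-1)^(n+1) * (q (n+1) * q (n+2)) := by
      calc (m:ℝ)^(n+1) * (((-1:ℝ)^(n+1) * (x * q (n+1) - p (n+1))) * q (n+2))
          ≤ (m:ℝ)^(n+1) * ((-1:ℝ)^(n+1) * (p (n+2) * q (n+1) - p (n+1) * q (n+2))) :=
            mul_le_mul_of_nonneg_left h9 (by positivity)
        _ ≤ _ := h10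
    have h12' : ((m:ℝ)^(n+1) * ((-1:ℝ)^(n+1) * (x * q (n+1) - p (n+1)))) * q (n+2)
          ≤ (((m:ℝ)-1)^(n+1) * q (n+1)) * q (n+2) := by nlinarith [h11]
    have h12 : (m:ℝ)^(n+1) * ((-1:ℝ)^(n+1) * (x * q (n+1) - p (n+1)))
        ≤ ((m:ℝ)-1)^(n+1) * q (n+1) := le_of_mul_le_mul_right h12' hq2p
    have h13 : p (n+1)/q (n+1) - x = -(x * q (n+1) - p (n+1))/q (n+1) := by
      field_simp
      ring
    have h14 : |(-(x * q (n+1) - p (n+1)))| = (-1:ℝ)^(n+1) * (x * q (n+1) - p (n+1)) := by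
      rw [abs_neg]
      have h15 : |(-1:ℝ)^(n+1) * (x * q (n+1) - p (n+1))| = |x * q (n+1) - p (n+1)| := by
        rw [abs_mul, abs_pow, abs_neg, abs_one, one_pow, one_mul]
      rw [← h15, abs_of_pos hv]
    rw [h13, abs_div, abs_of_pos hq1p, h14, div_pow,
      div_le_div_iff₀ hq1p (by positivity : (0:ℝ) < (m:ℝ)^(n+1))]
    nlinarith [h12]
  have hr0 : (0:ℝ) ≤ ((m:ℝ)-1)/m := by positivity
  have hr1 : ((m:ℝ)-1)/m < 1 := by rw [div_lt_one hm0]; linarith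
  have htz : Filter.Tendsto (fun n : ℕ => (((m:ℝ)-1)/m)^n) Filter.atTop (nhds 0) :=
    tendsto_pow_atTop_nhds_zero_of_lt_one hr0 hr1
  rw [tendsto_iff_dist_tendsto_zero]
  refine squeeze_zero (fun n => dist_nonneg) ?_ htz
  intro n
  rw [Real.dist_eq]
  cases n with
  | zero =>
    simp only [hp0, hq0, pow_zero, zero_div, zero_sub, abs_neg]
    rw [abs_of_pos hx.1]
    linarith [hx.2]
  | succ n => exact hbound n
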